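/- arXiv:2401.17117 — 6 statements merged into one kernel-verified Lean document; each statement's English description precedes it below -/
import Mathlib

section
/- Suppose the target moves with constant velocity and the observer moves with constant velocity. Let g(t₁) be the initial bearing (unit vector), θ(t₁) > 0 the initial subtended angle, ℓ > 0 the target size, and δv = v_T − v_o the constant relative velocity. Then the vector u = (g(t₁)/θ(t₁), δv/ℓ, 1) ∈ ℝ^7 lies in the null space of the observability matrix Q, where Q is built from rows [P_{g(t_i)}, (i−1)δt·P_{g(t_i)}, 0] and [θ(t_i)I, (i−1)δt·θ(t_i)I, −g(t_i)] for i = 1..k, with the noiseless measurements satisfying g(t_i) r(t_i) = s₀ + (i−1)δt·δv and θ(t_i) = ℓ/r(t_i) for s₀ = p_T(t₁) − p_o(t₁). -/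
open Matrix

lemma proj_mulVec (g x : Fin 3 → ℝ) :
    ((1 : Matrix (Fin 3) (Fin 3) ℝ) - Matrix.vecMulVec g g).mulVec x
      = x - (g ⬝ᵥ x) • g := by
  rw [Matrix.sub_mulVec, Matrix.one_mulVec]
  congr 1
  ext j
  simp [Matrix.vecMulVec, Matrix.mulVec, dotProduct, Finset.mul_sum,
    mul_comm, mul_left_comm]

/-- When both the target and the observer move with constant velocities, the
vector `u = (g(t₁)/θ(t₁), δv/ℓ, 1) ∈ ℝ⁷` lies in the null space of the
observability matrix `Q`: every block row of `Q` (namely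
`[P_{g(tᵢ)}, (i-1)δt P_{g(tᵢ)}, 0]` and `[θ(tᵢ)I, (i-1)δt θ(tᵢ)I, -g(tᵢ)]`)
annihilates `u`.  The noiseless measurements satisfy
`r(tᵢ) g(tᵢ) = s₀ + (i-1)δt δv` and `θ(tᵢ) = ℓ/r(tᵢ)` where
`s₀ = p_T(t₁) - p_o(t₁)` and `δv = v_T - v_o`. -/
theorem const_velocity_unobservable_mode
    (k : ℕ) (hk : 0 < k) (δt ℓ : ℝ) (hℓ : 0 < ℓ)
    (s₀ δv : Fin 3 → ℝ)
    (r : Fin k → ℝ) (hr : ∀ i, 0 < r i)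
    (g : Fin k → Fin 3 → ℝ) (hgu : ∀ i, g i ⬝ᵥ g i = 1)
    (hg : ∀ i : Fin k, r i • g i = s₀ + ((i : ℝ) * δt) • δv)
    (θ : Fin k → ℝ) (hθ : ∀ i, θ i = ℓ / r i) :
    ∀ i : Fin k,
      ((1 : Matrix (Fin 3) (Fin 3) ℝ) - Matrix.vecMulVec (g i) (g i)).mulVec
          ((θ ⟨0, hk⟩)⁻¹ • g ⟨0, hk⟩ + ((i : ℝ) * δt) • (ℓ⁻¹ • δv)) = 0 ∧
        θ i • ((θ ⟨0, hk⟩)⁻¹ • g ⟨0, hk⟩ + ((i : ℝ) * δt) • (ℓ⁻¹ • δv)) -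
          g i = 0 := by
  intro i
  have hℓ' : ℓ ≠ 0 := ne_of_gt hℓ
  have hr0 : r ⟨0, hk⟩ ≠ 0 := ne_of_gt (hr _)
  have hri : r i ≠ 0 := ne_of_gt (hr i)
  have h0 : ((⟨0, hk⟩ : Fin k) : ℝ) = 0 := by simp
  have hs0 : r ⟨0, hk⟩ • g ⟨0, hk⟩ = s₀ := by
    have := hg ⟨0, hk⟩
    rwa [h0, zero_mul, zero_smul, add_zero] at this
  have hθ0inv : (θ ⟨0, hk⟩)⁻¹ = r ⟨0, hk⟩ / ℓ := by
    rw [hθ, inv_div]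
  have hv : (θ ⟨0, hk⟩)⁻¹ • g ⟨0, hk⟩ + ((i : ℝ) * δt) • (ℓ⁻¹ • δv)
      = (r i / ℓ) • g i := by
    rw [hθ0inv, div_eq_inv_mul, mul_smul, hs0,
      smul_comm ((i : ℝ) * δt) ℓ⁻¹ δv, ← smul_add, ← hg i,
      div_eq_inv_mul, mul_smul]
  constructor
  · rw [hv, proj_mulVec, dotProduct_smul, hgu, smul_eq_mul, mul_one,
      sub_self]
  · rw [hv, hθ, smul_smul, div_mul_div_comm, mul_comm ℓ (r i),
      div_self (by positivity), one_smul, sub_self]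
end

section
/- Let A(t) = [I, tI, t²I, ..., tⁿI, ρ(t)] ∈ ℝ^{3×(3n+4)} where ρ : ℝ → ℝ^3 is N-times differentiable. The stacked matrix Ā(t) of A(t) and its derivatives A'(t), ..., A^{(N)}(t), with N ≥ n+1, has full column rank 3n+4 if and only if there exists i ∈ {n+1, ..., N} such that ρ^{(i)}(t) ≠ 0. -/
/-!
Row `(i, j)` of `Ā(t)` is row `j` of `A⁽ⁱ⁾(t)`. In the polynomial column `3k + j'` its entry is
`k (k-1) ⋯ (k-i+1) t^(k-i)` if `j = j'` and `0` otherwise, so it vanishes once `i > k`; the last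
column holds `ρ⁽ⁱ⁾(t)`. If `ρ⁽ⁱ⁾(t) = 0` for all `n < i ≤ N`, every row with `i > n` vanishes and
the rank is at most `3(n+1)`. If instead `ρ⁽ⁱ⁰⁾(t)_{j₀} ≠ 0`, the rows `(k, j)` with `k ≤ n`
followed by the row `(i₀, j₀)` form a square upper triangular submatrix with diagonal
`0!, 0!, 0!, 1!, …, n!, ρ⁽ⁱ⁰⁾(t)_{j₀}`, hence of full rank.
-/

open Matrix

namespace Matrix

variable {m n ι K : Type*} [Fintype n] [Field K]

theorem rank_le_card_of_row_eq_zero_of_notMem_range [Fintype m] [Fintype ι] (A : Matrix m n K)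
    (f : ι → m) (h : ∀ i ∉ Set.range f, A i = 0) : A.rank ≤ Fintype.card ι := by
  rw [rank_eq_finrank_span_row]
  calc Module.finrank K (Submodule.span K (Set.range A.row))
      ≤ Module.finrank K (Submodule.span K (Set.range (A.row ∘ f))) := by
        refine Submodule.finrank_mono (Submodule.span_le.mpr ?_)
        rintro _ ⟨i, rfl⟩
        by_cases hi : i ∈ Set.range f
        · obtain ⟨k, rfl⟩ := hi
          exact Submodule.subset_span ⟨k, rfl⟩
        · simp only [row, h i hi, SetLike.mem_coe, Submodule.zero_mem]
    _ ≤ Fintype.card ι := finrank_range_le_card _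

theorem rank_eq_card_of_isUpperTriangular_submatrix [LinearOrder n] (A : Matrix m n K)
    (r : n → m) (htri : (A.submatrix r id).IsUpperTriangular) (hdiag : ∀ c, A (r c) c ≠ 0) :
    A.rank = Fintype.card n := by
  classical
  refine le_antisymm (rank_le_card_width A) ?_
  have hdet : (A.submatrix r id).det ≠ 0 := by
    rw [det_of_isUpperTriangular htri]
    exact Finset.prod_ne_zero_iff.mpr fun c _ => hdiag c
  calc Fintype.card n = (A.submatrix r id).rank :=
        (rank_of_isUnit _ ((isUnit_iff_isUnit_det _).mpr hdet.isUnit)).symm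
    _ ≤ A.rank := rank_submatrix_le A r id

end Matrix

theorem ContDiffAt.iteratedDeriv_apply {𝕜 ι F : Type*} [NontriviallyNormedField 𝕜]
    [Fintype ι] [NormedAddCommGroup F] [NormedSpace 𝕜 F] {f : 𝕜 → ι → F} {x : 𝕜} {k : ℕ}
    (hf : ContDiffAt 𝕜 k f x) (i : ι) :
    iteratedDeriv k (fun s => f s i) x = iteratedDeriv k f x i := by
  have h := (ContinuousLinearMap.proj (R := 𝕜) (φ := fun _ : ι => F) i).iteratedFDeriv_comp_left
    hf le_rfl
  rw [iteratedDeriv_eq_iteratedFDeriv, iteratedDeriv_eq_iteratedFDeriv]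
  exact congrArg (fun L => L fun _ => (1 : 𝕜)) h

/-- `A(s) = [I, sI, …, sⁿI, ρ(s)]`: column `3k + j'` (for `k ≤ n`) is `sᵏ e_{j'}`. -/
def observationMatrix (n : ℕ) (ρ : ℝ → Fin 3 → ℝ) (s : ℝ) : Matrix (Fin 3) (Fin (3 * n + 4)) ℝ :=
  Matrix.of fun j c =>
    if (c : ℕ) < 3 * n + 3 then (if (c : ℕ) % 3 = (j : ℕ) then s ^ ((c : ℕ) / 3) else 0)
    else ρ s j

noncomputable def stackedDerivMatrix (n N : ℕ) (ρ : ℝ → Fin 3 → ℝ) (t : ℝ) :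
    Matrix (Fin (N + 1) × Fin 3) (Fin (3 * n + 4)) ℝ :=
  Matrix.of fun p c => iteratedDeriv p.1 (fun s => observationMatrix n ρ s p.2 c) t

section stackedDerivMatrix

variable {n N : ℕ} {ρ : ℝ → Fin 3 → ℝ} {t : ℝ} {i : Fin (N + 1)} {j : Fin 3}
  {c : Fin (3 * n + 4)}

theorem stackedDerivMatrix_apply_of_lt (hc : (c : ℕ) < 3 * n + 3) :
    stackedDerivMatrix n N ρ t (i, j) c =
      if (c : ℕ) % 3 = j then ((c : ℕ) / 3).descFactorial i * t ^ ((c : ℕ) / 3 - i) else 0 := by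
  by_cases hj : (c : ℕ) % 3 = j <;>
    simp [stackedDerivMatrix, observationMatrix, hc, hj]

theorem stackedDerivMatrix_apply_eq_zero (hc : (c : ℕ) < 3 * n + 3) (hi : (c : ℕ) / 3 < i) :
    stackedDerivMatrix n N ρ t (i, j) c = 0 := by
  simp [stackedDerivMatrix_apply_of_lt hc, Nat.descFactorial_eq_zero_iff_lt.mpr hi]

theorem stackedDerivMatrix_apply_of_le (hρ : ContDiff ℝ (N : ℕ∞) ρ) (hc : 3 * n + 3 ≤ (c : ℕ)) :
    stackedDerivMatrix n N ρ t (i, j) c = iteratedDeriv i ρ t j := by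
  simp only [stackedDerivMatrix, observationMatrix, of_apply, if_neg (not_lt.mpr hc)]
  exact (hρ.of_le (by exact_mod_cast Nat.lt_succ_iff.mp i.isLt)).contDiffAt.iteratedDeriv_apply j

theorem stackedDerivMatrix_rank_le (hN : n ≤ N) (hρ : ContDiff ℝ (N : ℕ∞) ρ)
    (h : ∀ i, n + 1 ≤ i → i ≤ N → iteratedDeriv i ρ t = 0) :
    (stackedDerivMatrix n N ρ t).rank ≤ 3 * n + 3 := by
  have hrows := (stackedDerivMatrix n N ρ t).rank_le_card_of_row_eq_zero_of_notMem_range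
    (fun q : Fin (n + 1) × Fin 3 => (Fin.castLE (by omega) q.1, q.2)) ?_
  · simpa [Nat.succ_mul, mul_comm] using hrows
  rintro ⟨i, j⟩ hij
  have hi : n + 1 ≤ (i : ℕ) := by
    by_contra! hi
    exact hij ⟨(⟨i, hi⟩, j), rfl⟩
  funext c
  rcases lt_or_ge (c : ℕ) (3 * n + 3) with hc | hc
  · exact stackedDerivMatrix_apply_eq_zero hc (by omega)
  · rw [stackedDerivMatrix_apply_of_le hρ hc, h i hi (by omega)]
    rfl

theorem stackedDerivMatrix_rank_eq {i₀ : ℕ} (hi₀ : n + 1 ≤ i₀) (hi₀N : i₀ ≤ N)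
    (hρ : ContDiff ℝ (N : ℕ∞) ρ) (h : iteratedDeriv i₀ ρ t j ≠ 0) :
    (stackedDerivMatrix n N ρ t).rank = 3 * n + 4 := by
  let r : Fin (3 * n + 4) → Fin (N + 1) × Fin 3 := fun c =>
    if hc : (c : ℕ) < 3 * n + 3 then (⟨c / 3, by omega⟩, ⟨c % 3, by omega⟩) else (⟨i₀, by omega⟩, j)
  have := (stackedDerivMatrix n N ρ t).rank_eq_card_of_isUpperTriangular_submatrix r ?_ ?_
  · simpa using this
  · intro c' c (hlt : c < c')
    have hc : (c : ℕ) < 3 * n + 3 := by omega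
    simp only [submatrix_apply, id, r]
    split_ifs with hc'
    · by_cases hmod : (c : ℕ) % 3 = (c' : ℕ) % 3
      · exact stackedDerivMatrix_apply_eq_zero hc (by simp only; omega)
      · rw [stackedDerivMatrix_apply_of_lt hc, if_neg hmod]
    · exact stackedDerivMatrix_apply_eq_zero hc (by simp only; omega)
  · intro c
    simp only [r]
    split_ifs with hc
    · rw [stackedDerivMatrix_apply_of_lt hc]
      simp [Nat.descFactorial_self, Nat.factorial_ne_zero]
    · rwa [stackedDerivMatrix_apply_of_le hρ (by omega)]

end stackedDerivMatrix

/-- Rank lemma for the continuous-time observability analysis.  Let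
`A(t) = [I, tI, t²I, …, tⁿI, ρ(t)] ∈ ℝ^{3×(3n+4)}` with `ρ : ℝ → ℝ³`
`N`-times differentiable.  The stacked matrix `Ā(t)` of `A(t)` and its
derivatives up to order `N ≥ n+1` has full column rank `3n+4` if and only if
`ρ⁽ⁱ⁾(t) ≠ 0` for some `i ∈ {n+1, …, N}`. -/
theorem stacked_derivative_matrix_full_rank_iff
    (n N : ℕ) (hN : n + 1 ≤ N) (ρ : ℝ → Fin 3 → ℝ)
    (hρ : ContDiff ℝ (N : ℕ∞) ρ) (t : ℝ)
    (Abar : Matrix (Fin (N + 1) × Fin 3) (Fin (3 * n + 4)) ℝ)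
    (hAbar : Abar = Matrix.of fun (p : Fin (N + 1) × Fin 3)
        (c : Fin (3 * n + 4)) =>
      iteratedDeriv (p.1 : ℕ)
        (fun s : ℝ =>
          if (c : ℕ) < 3 * n + 3 then
            (if (c : ℕ) % 3 = (p.2 : ℕ) then s ^ ((c : ℕ) / 3) else 0)
          else ρ s p.2) t) :
    Abar.rank = 3 * n + 4 ↔
      ∃ i, n + 1 ≤ i ∧ i ≤ N ∧ iteratedDeriv i ρ t ≠ 0 := by
  obtain rfl : Abar = stackedDerivMatrix n N ρ t := hAbar
  constructor
  · intro hrank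
    by_contra! hvanish
    have := stackedDerivMatrix_rank_le (Nat.le_of_succ_le hN) hρ hvanish
    omega
  · rintro ⟨i, hi, hiN, hne⟩
    obtain ⟨j, hj⟩ := Function.ne_iff.mp hne
    exact stackedDerivMatrix_rank_eq hi hiN hρ hj
end

section
/- Suppose the target position is p_T(t) = b₀ + b₁t + ... + b_n tⁿ and the observer position is p_o(t) = c₀ + c₁t + ... + c_n tⁿ + h(t) where h is a polynomial-type function with h^{(i)}(0) = 0 for i = 0,...,n, and p_T(t) ≠ p_o(t) for all t. Then the pair (relative trajectory s(t) = p_T(t) − p_o(t), scale ℓ > 0) is uniquely determined by the functions g(t) = s(t)/‖s(t)‖ and θ(t) = ℓ/‖s(t)‖ (together with h(t)) if and only if h ≢ 0. -/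
/-!
Bearing and angle together give `s(t) = (ℓ / θ(t)) • g(t)`, so two admissible pairs `(s, ℓ)` and
`(s', ℓ')` satisfy `s'(t) = (ℓ' / ℓ) • s(t)` for all `t`. Since the observer's part `h` enters both
trajectories unscaled, comparing the coefficients of the monomials `tᵏ` (which are linearly
independent, by a Vandermonde argument) gives `s' = c • s` and `(1 - c) • h = 0` with `c = ℓ' / ℓ`;
hence `c = 1` as soon as `h ≠ 0`. If `h = 0`, the pairs `(s, ℓ)` and `(2 • s, 2 * ℓ)` are
indistinguishable.
-/

open Finset

section Monomials

variable {K E : Type*} [Field K] [CharZero K] [AddCommGroup E] [Module K E]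

theorem eq_zero_of_forall_sum_pow_smul_eq_zero {N : ℕ} {c : Fin N → E}
    (H : ∀ t : K, ∑ k : Fin N, t ^ (k : ℕ) • c k = 0) : c = 0 := by
  funext k
  refine (Module.forall_dual_apply_eq_zero_iff K (c k)).1 fun φ => ?_
  have hφ : (fun k => φ (c k)) = 0 :=
    Matrix.eq_zero_of_forall_index_sum_pow_mul_eq_zero (f := fun i : Fin N => (i : K))
      (Nat.cast_injective.comp Fin.val_injective)
      fun j => by simpa [map_sum] using congrArg φ (H j)
  exact congrFun hφ k

theorem eq_zero_and_eq_zero_of_forall_sum_pow_smul_add_sum_pow_smul_eq_zero {p m : ℕ}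
    {a : Fin p → E} {b : Fin m → E}
    (H : ∀ t : K, ∑ j : Fin p, t ^ (j : ℕ) • a j + ∑ j : Fin m, t ^ (p + (j : ℕ)) • b j = 0) :
    a = 0 ∧ b = 0 := by
  have hab : Fin.append a b = 0 := eq_zero_of_forall_sum_pow_smul_eq_zero fun t => by
    simpa [Fin.sum_univ_add] using H t
  exact ⟨funext fun j => by simpa using congrFun hab (Fin.castAdd m j),
    funext fun j => by simpa using congrFun hab (Fin.natAdd p j)⟩

theorem eq_smul_and_eq_one_or_eq_zero_of_forall_eq_smul {p m : ℕ} {s s' : Fin p → E}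
    {d : Fin m → E} {c : K}
    (H : ∀ t : K, ∑ j : Fin p, t ^ (j : ℕ) • s' j + ∑ j : Fin m, t ^ (p + (j : ℕ)) • d j =
      c • (∑ j : Fin p, t ^ (j : ℕ) • s j + ∑ j : Fin m, t ^ (p + (j : ℕ)) • d j)) :
    s' = c • s ∧ (c = 1 ∨ d = 0) := by
  obtain ⟨hs, hd⟩ : s' - c • s = 0 ∧ (1 - c) • d = 0 :=
    eq_zero_and_eq_zero_of_forall_sum_pow_smul_add_sum_pow_smul_eq_zero fun (t : K) => by
      have hcomm : ∀ (k : ℕ) (x : E), t ^ k • c • x = c • t ^ k • x :=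
        fun k x => smul_comm _ _ _
      simp only [Pi.sub_apply, Pi.smul_apply, smul_sub, hcomm, sum_sub_distrib, ← smul_sum,
        sub_smul, one_smul]
      linear_combination (norm := module) H t
  exact ⟨sub_eq_zero.1 hs, (smul_eq_zero.1 hd).imp (fun hc => (sub_eq_zero.1 hc).symm) id⟩

end Monomials

section BearingAngle

variable {E : Type*} [NormedAddCommGroup E] [NormedSpace ℝ E]

theorem eq_div_smul_of_inv_norm_smul_eq_of_div_norm_eq {u v : E} {ℓ ℓ' : ℝ} (hu : u ≠ 0)
    (hv : v ≠ 0) (hℓ : ℓ ≠ 0) (hg : ‖u‖⁻¹ • u = ‖v‖⁻¹ • v) (hθ : ℓ / ‖u‖ = ℓ' / ‖v‖) :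
    v = (ℓ' / ℓ) • u := by
  have hu' : ‖u‖ ≠ 0 := norm_ne_zero_iff.2 hu
  have hnorm : ‖v‖ = ℓ' / ℓ * ‖u‖ := by
    field_simp at hθ ⊢
    linarith
  have hray : ‖u‖ • v = ‖v‖ • u :=
    ((sameRay_iff_inv_norm_smul_eq_of_ne hu hv).2 hg).norm_smul_eq
  refine smul_right_injective E hu' ?_
  simp only [hray, hnorm, smul_smul, mul_comm]

theorem inv_norm_smul_pos_smul {u : E} (hu : u ≠ 0) {a : ℝ} (ha : 0 < a) :
    ‖a • u‖⁻¹ • (a • u) = ‖u‖⁻¹ • u :=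
  ((SameRay.sameRay_pos_smul_right u ha).inv_norm_smul_eq hu (smul_ne_zero ha.ne' hu)).symm

theorem mul_div_norm_pos_smul (u : E) {a : ℝ} (ha : 0 < a) (ℓ : ℝ) :
    a * ℓ / ‖a • u‖ = ℓ / ‖u‖ := by
  rw [norm_smul, Real.norm_of_nonneg ha.le, mul_div_mul_left _ _ ha.ne']

end BearingAngle

/-- Theorem 1 (necessary and sufficient observability condition).  Let the
relative trajectory be `s(t) = s₀ + s₁ t + ⋯ + sₙ tⁿ + h(t)` where
`h(t) = Σ_{j≥1} d_j t^{n+j}` is the observer's higher-order motion.  The pair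
(polynomial coefficients `s₀,…,sₙ`, scale `ℓ > 0`) is uniquely determined by
the bearing function `g(t) = s(t)/‖s(t)‖` and the angle function
`θ(t) = ℓ/‖s(t)‖` if and only if `h ≢ 0`. -/
theorem bearing_angle_observability_iff
    (n m : ℕ) (d : Fin m → EuclideanSpace ℝ (Fin 3))
    (h : ℝ → EuclideanSpace ℝ (Fin 3))
    (hh : ∀ t, h t = ∑ j : Fin m, t ^ (n + 1 + (j : ℕ)) • d j) :
    (∀ (s s' : Fin (n + 1) → EuclideanSpace ℝ (Fin 3)) (ℓ ℓ' : ℝ),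
        0 < ℓ → 0 < ℓ' →
        (∀ t, (∑ j : Fin (n + 1), t ^ (j : ℕ) • s j) + h t ≠ 0) →
        (∀ t, (∑ j : Fin (n + 1), t ^ (j : ℕ) • s' j) + h t ≠ 0) →
        (∀ t, ‖(∑ j : Fin (n + 1), t ^ (j : ℕ) • s j) + h t‖⁻¹ •
              ((∑ j : Fin (n + 1), t ^ (j : ℕ) • s j) + h t) =
            ‖(∑ j : Fin (n + 1), t ^ (j : ℕ) • s' j) + h t‖⁻¹ •
              ((∑ j : Fin (n + 1), t ^ (j : ℕ) • s' j) + h t)) →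
        (∀ t, ℓ / ‖(∑ j : Fin (n + 1), t ^ (j : ℕ) • s j) + h t‖ =
            ℓ' / ‖(∑ j : Fin (n + 1), t ^ (j : ℕ) • s' j) + h t‖) →
        s = s' ∧ ℓ = ℓ') ↔
      h ≠ 0 := by
  constructor
  · rintro huniq rfl
    set u : EuclideanSpace ℝ (Fin 3) := EuclideanSpace.single 0 1
    have hu : u ≠ 0 := by simp [u]
    set s₀ : Fin (n + 1) → EuclideanSpace ℝ (Fin 3) := Pi.single 0 u
    have htraj : ∀ a t : ℝ,
        (∑ j : Fin (n + 1), t ^ (j : ℕ) • (a • s₀) j) + (0 : ℝ → EuclideanSpace ℝ (Fin 3)) t =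
          a • u := by
      simp [s₀, Fin.sum_univ_succ]
    have key := huniq ((1 : ℝ) • s₀) ((2 : ℝ) • s₀) 1 2 one_pos two_pos
    simp only [htraj] at key
    simp only [one_smul] at key
    have h12 : (1 : ℝ) = 2 := (key (fun _ => hu) (fun _ => smul_ne_zero two_ne_zero hu)
      (fun _ => (inv_norm_smul_pos_smul hu two_pos).symm)
      (fun _ => by simpa only [mul_one] using (mul_div_norm_pos_smul u two_pos 1).symm)).2
    norm_num at h12
  · intro hh0 s s' ℓ ℓ' hℓ _ hs hs' hg hθ
    obtain ⟨hs_eq, hc | hd⟩ := eq_smul_and_eq_one_or_eq_zero_of_forall_eq_smul fun t => by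
      simpa only [hh] using
        eq_div_smul_of_inv_norm_smul_eq_of_div_norm_eq (hs t) (hs' t) hℓ.ne' (hg t) (hθ t)
    · refine ⟨by rw [hs_eq, hc, one_smul], ?_⟩
      field_simp at hc
      linarith
    · exact absurd (funext fun t => by simp [hh, hd]) hh0
end

section
/- Let t₁ < t₂ < ... < t_N be distinct times with N ≥ n+2, and ρ : ℝ → ℝ^3 any function. The stacked matrix à with block rows [I, t_iI, ..., t_iⁿI, ρ(t_i)], i = 1..N, has full column rank 3n+4 if and only if ρ restricted to {t₁,...,t_N} is not equal to the restriction of any ℝ^3-valued polynomial of degree ≤ n. -/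
/-!
The first `3n + 3` columns of `A` are the samples `(tᵢ ^ j • e_k)ᵢ`. With at least `n + 1`
distinct times they are linearly independent by the Vandermonde determinant, so `A` has full
column rank exactly when its last column `(ρ (tᵢ))ᵢ` avoids their span; and that span consists
precisely of the samples of `ℝ³`-valued polynomials of degree at most `n`.
-/

open Matrix Function

theorem Matrix.rank_eq_card_width_iff_linearIndependent_col {m n R : Type*} [Fintype n]
    [CommRing R] [Nontrivial R] (A : Matrix m n R) :
    A.rank = Fintype.card n ↔ LinearIndependent R A.col := by
  rw [rank_eq_finrank_span_cols, linearIndependent_iff_card_eq_finrank_span, Set.finrank, eq_comm]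

theorem linearIndependent_pow_of_injective {K ι : Type*} [Field K] [Fintype ι] {t : ι → K}
    {m : ℕ} (ht : Injective t) (hm : m ≤ Fintype.card ι) :
    LinearIndependent K (fun (j : Fin m) (i : ι) => t i ^ (j : ℕ)) := by
  rw [Fintype.linearIndependent_iff]
  intro c hc
  obtain ⟨e⟩ : Nonempty (Fin m ↪ ι) :=
    Function.Embedding.nonempty_of_card_le (by simpa using hm)
  have hc_zero := Matrix.eq_zero_of_forall_index_sum_mul_pow_eq_zero (f := t ∘ e)
    (ht.comp e.injective) (fun j => by simpa [Finset.sum_apply] using congrFun hc (e j))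
  exact congrFun hc_zero

section MonomialColumns

variable {K ι κ : Type*} [Field K] [DecidableEq κ]

/-- Column `(j, k)` of the block `[I, tᵢ I, …, tᵢ ^ (m - 1) I]`, rows indexed by `(i, k')`. -/
def monomialColumns (t : ι → K) (m : ℕ) (jk : Fin m × κ) (q : ι × κ) : K :=
  if jk.2 = q.2 then t q.1 ^ (jk.1 : ℕ) else 0

variable [Fintype κ] {t : ι → K} {m : ℕ}

theorem sum_smul_monomialColumns (c : Fin m × κ → K) :
    ∑ jk, c jk • monomialColumns t m jk =
      fun q => ∑ j : Fin m, c (j, q.2) * t q.1 ^ (j : ℕ) := by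
  ext q
  simp [Finset.sum_apply, Fintype.sum_prod_type, monomialColumns]

theorem linearIndependent_monomialColumns [Fintype ι] (ht : Injective t)
    (hm : m ≤ Fintype.card ι) : LinearIndependent K (monomialColumns (κ := κ) t m) := by
  rw [Fintype.linearIndependent_iff]
  intro c hc jk
  rw [sum_smul_monomialColumns] at hc
  have hpow := linearIndependent_pow_of_injective (K := K) ht hm
  refine Fintype.linearIndependent_iff.mp hpow (fun j => c (j, jk.2)) (funext fun i => ?_) jk.1
  simpa [Finset.sum_apply] using congrFun hc (i, jk.2)

theorem mem_span_monomialColumns_iff (f : ι → κ → K) :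
    (fun q => f q.1 q.2) ∈ Submodule.span K (Set.range (monomialColumns t m)) ↔
      ∃ p : Fin m → κ → K, ∀ i, f i = ∑ j : Fin m, t i ^ (j : ℕ) • p j := by
  simp only [Submodule.mem_span_range_iff_exists_fun, sum_smul_monomialColumns, funext_iff,
    Prod.forall]
  constructor
  · rintro ⟨c, hc⟩
    exact ⟨fun j k => c (j, k), fun i k => by simp [← hc, Finset.sum_apply, mul_comm]⟩
  · rintro ⟨p, hp⟩
    exact ⟨fun jk => p jk.1 jk.2, fun i k => by simp [hp, Finset.sum_apply, mul_comm]⟩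

end MonomialColumns

/-- Sufficiency condition for Theorem 2: for distinct times `t₁ < ⋯ < t_N`
with `N ≥ n+2`, the stacked matrix `Ã` with block rows
`[I, tᵢI, …, tᵢⁿI, ρ(tᵢ)]` has full column rank `3n+4` if and only if `ρ`
restricted to `{t₁,…,t_N}` does not coincide with any `ℝ³`-valued polynomial
of degree at most `n`. -/
theorem stacked_matrix_full_rank_iff_not_polynomial
    (n N : ℕ) (hN : n + 2 ≤ N) (t : Fin N → ℝ) (ht : StrictMono t)
    (ρ : ℝ → Fin 3 → ℝ)
    (A : Matrix (Fin N × Fin 3) (Fin (3 * n + 4)) ℝ)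
    (hA : A = Matrix.of fun (p : Fin N × Fin 3) (c : Fin (3 * n + 4)) =>
      if (c : ℕ) < 3 * n + 3 then
        (if (c : ℕ) % 3 = (p.2 : ℕ) then (t p.1) ^ ((c : ℕ) / 3) else 0)
      else ρ (t p.1) p.2) :
    A.rank = 3 * n + 4 ↔
      ¬∃ p : Fin (n + 1) → Fin 3 → ℝ,
        ∀ i : Fin N, ρ (t i) = ∑ j : Fin (n + 1), (t i) ^ (j : ℕ) • p j := by
  -- `finProdFinEquiv` sends `(j, k)` to `3 * j + k`, which is the column order of `A`.
  have hcols : A.col ∘ finCongr (by ring : (n + 1) * 3 + 1 = 3 * n + 4) =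
      Fin.snoc (monomialColumns t (n + 1) ∘ finProdFinEquiv.symm) (fun q => ρ (t q.1) q.2) := by
    funext c q
    induction c using Fin.lastCases with
    | last => simp [hA]
    | cast c =>
      have hc := c.isLt
      simp [hA, monomialColumns, Fin.ext_iff, show (c : ℕ) < 3 * n + 3 by omega]
  have hrank := A.rank_eq_card_width_iff_linearIndependent_col
  rw [Fintype.card_fin] at hrank
  rw [hrank, ← linearIndependent_equiv (finCongr (by ring : (n + 1) * 3 + 1 = 3 * n + 4)), hcols,
    linearIndependent_finSnoc, linearIndependent_equiv, EquivLike.range_comp,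
    mem_span_monomialColumns_iff (fun i => ρ (t i)),
    and_iff_right <|
      linearIndependent_monomialColumns ht.injective (by rw [Fintype.card_fin]; omega)]
end

section
/- For distinct times t₁, ..., t_{n+2}, if the (n+1)-th order divided difference of some component of ρ over the points t₁, ..., t_{n+2} is nonzero, then the (n+2)-block stacked matrix à with block rows [I, t_iI, ..., t_iⁿI, ρ(t_i)] (i = 1, ..., n+2), which has 3(n+2) rows and 3(n+1)+1 = 3n+4 columns, has full column rank 3n+4. -/
open Polynomial Finset

lemma basis_coeff_top {n : ℕ} (t : Fin (n+2) → ℝ) (ht : Function.Injective t) (i : Fin (n+2)) :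
    (Lagrange.basis Finset.univ t i).coeff (n+1)
      = ∏ j ∈ Finset.univ.erase i, (t i - t j)⁻¹ := by
  have hb : Lagrange.basis Finset.univ t i
      = Polynomial.C (Lagrange.nodalWeight Finset.univ t i)
        * Lagrange.nodal (Finset.univ.erase i) t := by
    rw [Lagrange.basis_eq_prod_sub_inv_mul_nodal_div (Finset.mem_univ i),
        ← Lagrange.nodal_erase_eq_nodal_div (Finset.mem_univ i)]
  have hdeg : (Lagrange.nodal (Finset.univ.erase i) t).natDegree = n+1 := by
    rw [Lagrange.natDegree_nodal, Finset.card_erase_of_mem (Finset.mem_univ i)]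
    simp
  have hm := Lagrange.nodal_monic (s := Finset.univ.erase i) (v := t)
  rw [hb, Polynomial.coeff_C_mul, ← hdeg, hm.coeff_natDegree, mul_one]
  rfl

lemma dd_pow_zero {n : ℕ} (t : Fin (n+2) → ℝ) (ht : Function.Injective t)
    (k : ℕ) (hk : k ≤ n) :
    ∑ i : Fin (n+2), t i ^ k * ∏ j ∈ Finset.univ.erase i, (t i - t j)⁻¹ = 0 := by
  have hinj : Set.InjOn t (Finset.univ : Finset (Fin (n+2))) := ht.injOn
  have hdeg : ((X : ℝ[X]) ^ k).degree < (Finset.univ : Finset (Fin (n+2))).card := by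
    rw [Polynomial.degree_X_pow]
    simp only [Finset.card_univ, Fintype.card_fin]
    exact_mod_cast Nat.lt_of_le_of_lt hk (by omega)
  have h := Lagrange.eq_interpolate hinj hdeg
  have h2 := congrArg (fun p => Polynomial.coeff p (n+1)) h
  simp only [Lagrange.interpolate_apply, Polynomial.finset_sum_coeff,
    Polynomial.coeff_C_mul, Polynomial.coeff_X_pow, Polynomial.eval_pow,
    Polynomial.eval_X] at h2
  rw [if_neg (by omega)] at h2
  calc ∑ i : Fin (n + 2), t i ^ k * ∏ j ∈ Finset.univ.erase i, (t i - t j)⁻¹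
      = ∑ i : Fin (n + 2), t i ^ k * (Lagrange.basis Finset.univ t i).coeff (n+1) := by
        exact Finset.sum_congr rfl fun i _ => by rw [basis_coeff_top t ht i]
    _ = 0 := h2.symm

lemma vandermonde_zero {n : ℕ} (t : Fin (n+2) → ℝ) (ht : Function.Injective t)
    (c : ℕ → ℝ) (h : ∀ i, ∑ k ∈ Finset.range (n+1), c k * t i ^ k = 0) :
    ∀ k ≤ n, c k = 0 := by
  set p : ℝ[X] := ∑ k ∈ Finset.range (n+1), Polynomial.C (c k) * X ^ k with hp
  have hdeg : p.natDegree ≤ n := by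
    apply Polynomial.natDegree_sum_le_of_forall_le
    intro k hk
    calc (Polynomial.C (c k) * X ^ k).natDegree ≤ (X ^ k : ℝ[X]).natDegree :=
          Polynomial.natDegree_C_mul_le _ _
      _ ≤ n := by rw [Polynomial.natDegree_X_pow]; exact Nat.lt_succ_iff.mp (Finset.mem_range.mp hk)
  have heval : ∀ i, p.eval (t i) = 0 := by
    intro i
    rw [hp]
    simp only [Polynomial.eval_finset_sum, Polynomial.eval_mul, Polynomial.eval_C,
      Polynomial.eval_pow, Polynomial.eval_X]
    exact h i
  have hzero : p = 0 :=
    Polynomial.eq_zero_of_natDegree_lt_card_of_eval_eq_zero p ht heval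
      (by rw [Fintype.card_fin]; omega)
  intro k hk
  have : p.coeff k = c k := by
    rw [hp, Polynomial.finset_sum_coeff]
    simp only [Polynomial.coeff_C_mul, Polynomial.coeff_X_pow, mul_ite, mul_one, mul_zero]
    rw [Finset.sum_ite_eq (Finset.range (n+1)) k (fun m => c m)]
    · simp only [Finset.mem_range]
      rw [if_pos (by omega)]
  rw [hzero, Polynomial.coeff_zero] at this
  exact this.symm
open Matrix

-- (aux lemmas assumed above; testing main structure with them imported via copy later)
lemma sum_range_three_mul {M : Type*} [AddCommMonoid M] (m : ℕ) (f : ℕ → M) :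
    ∑ c ∈ Finset.range (3*m), f c
      = ∑ k ∈ Finset.range m, (f (3*k) + f (3*k+1) + f (3*k+2)) := by
  induction m with
  | zero => simp
  | succ m ih =>
    have h3 : 3*(m+1) = (3*m+1)+1+1 := by ring
    rw [h3, Finset.sum_range_succ, Finset.sum_range_succ, Finset.sum_range_succ,
      Finset.sum_range_succ, ih]
    ring_nf
    abel

/-- Discrete observability with the minimal number `n+2` of observations: if
for some component the `(n+1)`-th divided difference of `ρ` over the distinct
points `t₁,…,t_{n+2}` is nonzero, then the stacked matrix `Ã` with block rows
`[I, tᵢI, …, tᵢⁿI, ρ(tᵢ)]` has full column rank `3n+4`. -/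
theorem divided_difference_nonzero_full_rank
    (n : ℕ) (t : Fin (n + 2) → ℝ) (ht : Function.Injective t)
    (ρ : ℝ → Fin 3 → ℝ)
    (hdd : ∃ a : Fin 3,
      (∑ i : Fin (n + 2),
          ρ (t i) a / ∏ j ∈ Finset.univ.erase i, (t i - t j)) ≠ 0)
    (A : Matrix (Fin (n + 2) × Fin 3) (Fin (3 * n + 4)) ℝ)
    (hA : A = Matrix.of fun (p : Fin (n + 2) × Fin 3) (c : Fin (3 * n + 4)) =>
      if (c : ℕ) < 3 * n + 3 then
        (if (c : ℕ) % 3 = (p.2 : ℕ) then (t p.1) ^ ((c : ℕ) / 3) else 0)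
      else ρ (t p.1) p.2) :
    A.rank = 3 * n + 4 := by
  -- reduce to injectivity of mulVec
  have hker : LinearMap.ker A.mulVecLin = ⊥ := by
    rw [LinearMap.ker_eq_bot']
    intro v hv
    set u : ℕ → ℝ := fun m => if h : m < 3*n+4 then v ⟨m, h⟩ else 0 with hu
    have huv : ∀ (c : Fin (3*n+4)), u (c : ℕ) = v c := by
      intro c
      rw [hu]
      simp only [c.isLt, dif_pos]
    -- the scalar equations
    have key : ∀ (i : Fin (n+2)) (a : Fin 3),
        (∑ k ∈ Finset.range (n+1), u (3*k+(a:ℕ)) * t i ^ k)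
          + ρ (t i) a * u (3*n+3) = 0 := by
      intro i a
      have h0 : ∑ c : Fin (3*n+4), A (i,a) c * v c = 0 := by
        have := congrFun hv (i, a)
        simpa [Matrix.mulVecLin_apply, Matrix.mulVec, dotProduct] using this
      set g : ℕ → ℝ := fun m =>
        (if m < 3*n+3 then (if m % 3 = (a:ℕ) then t i ^ (m/3) else 0)
          else ρ (t i) a) * u m with hg
      have h1 : ∑ m ∈ Finset.range (3*n+4), g m = 0 := by
        rw [← Fin.sum_univ_eq_sum_range g (3*n+4), ← h0]
        apply Finset.sum_congr rfl
        intro c _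
        rw [hg, hA]
        simp only [Matrix.of_apply, huv]
      have h2 : (3:ℕ)*n+4 = (3*(n+1))+1 := by ring
      rw [h2, Finset.sum_range_succ, sum_range_three_mul] at h1
      have hgval : ∀ k < n+1, ∀ r < 3,
          g (3*k+r) = if r = (a:ℕ) then u (3*k+r) * t i ^ k else 0 := by
        intro k hk r hr
        have e1 : 3*k+r < 3*n+3 := by omega
        have e2 : (3*k+r) % 3 = r := by omega
        have e3 : (3*k+r) / 3 = k := by omega
        rw [hg]
        simp only [if_pos e1, e2, e3]
        split
        · ring
        · rw [zero_mul]
      have hsum3 : ∀ k ∈ Finset.range (n+1),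
          g (3*k) + g (3*k+1) + g (3*k+2) = u (3*k+(a:ℕ)) * t i ^ k := by
        intro k hk
        have hk' := Finset.mem_range.mp hk
        have e0 : g (3*k) = if 0 = (a:ℕ) then u (3*k+0) * t i ^ k else 0 :=
          hgval k hk' 0 (by omega)
        have e1 : g (3*k+1) = if 1 = (a:ℕ) then u (3*k+1) * t i ^ k else 0 :=
          hgval k hk' 1 (by omega)
        have e2 : g (3*k+2) = if 2 = (a:ℕ) then u (3*k+2) * t i ^ k else 0 :=
          hgval k hk' 2 (by omega)
        rw [e0, e1, e2]
        have ha : (a:ℕ) = 0 ∨ (a:ℕ) = 1 ∨ (a:ℕ) = 2 := by omega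
        rcases ha with h|h|h <;> rw [h] <;> simp
      rw [Finset.sum_congr rfl hsum3] at h1
      have hlast : g (3*(n+1)) = ρ (t i) a * u (3*n+3) := by
        rw [hg]
        have : ¬ (3*(n+1) < 3*n+3) := by omega
        simp only [this, if_false]
        norm_num
        left; ring_nf
      rw [hlast] at h1
      convert h1 using 3 <;> ring
    -- the divided-difference weights
    set P : Fin (n+2) → ℝ := fun i => ∏ j ∈ Finset.univ.erase i, (t i - t j)⁻¹ with hP
    have hz : ∀ k ≤ n, ∑ i : Fin (n+2), t i ^ k * P i = 0 := fun k hk => dd_pow_zero t ht k hk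
    -- Step 1: the last coordinate vanishes
    obtain ⟨a₀, hS⟩ := hdd
    have hS' : ∑ i : Fin (n+2), ρ (t i) a₀ * P i ≠ 0 := by
      intro hcon
      apply hS
      rw [← hcon]
      apply Finset.sum_congr rfl
      intro i _
      simp only [hP, div_eq_mul_inv, ← Finset.prod_inv_distrib]
    have hw : u (3*n+3) = 0 := by
      have e1 : ∑ i : Fin (n+2),
          ((∑ k ∈ Finset.range (n+1), u (3*k+(a₀:ℕ)) * t i ^ k)
            + ρ (t i) a₀ * u (3*n+3)) * P i = 0 :=
        Finset.sum_eq_zero fun i _ => by rw [key i a₀, zero_mul]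
      have e2 : ∑ i : Fin (n+2),
          ((∑ k ∈ Finset.range (n+1), u (3*k+(a₀:ℕ)) * t i ^ k)
            + ρ (t i) a₀ * u (3*n+3)) * P i
          = (∑ k ∈ Finset.range (n+1), u (3*k+(a₀:ℕ))
              * ∑ i : Fin (n+2), t i ^ k * P i)
            + u (3*n+3) * ∑ i : Fin (n+2), ρ (t i) a₀ * P i := by
        simp only [add_mul, Finset.sum_add_distrib, Finset.sum_mul, Finset.mul_sum]
        rw [Finset.sum_comm]
        congr 1
        · apply Finset.sum_congr rfl; intro k _
          apply Finset.sum_congr rfl; intro i _; ring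
        · apply Finset.sum_congr rfl; intro i _; ring
      rw [e2] at e1
      have e3 : ∑ k ∈ Finset.range (n+1), u (3*k+(a₀:ℕ))
          * ∑ i : Fin (n+2), t i ^ k * P i = 0 := by
        apply Finset.sum_eq_zero
        intro k hk
        rw [hz k (Nat.lt_succ_iff.mp (Finset.mem_range.mp hk)), mul_zero]
      rw [e3, zero_add] at e1
      exact (mul_eq_zero.mp e1).resolve_right hS'
    -- Step 2: all other coordinates vanish
    have hcoef : ∀ (a : Fin 3) (k : ℕ), k ≤ n → u (3*k+(a:ℕ)) = 0 := by
      intro a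
      apply vandermonde_zero t ht (fun k => u (3*k+(a:ℕ)))
      intro i
      have := key i a
      rw [hw, mul_zero, add_zero] at this
      exact this
    funext c
    by_cases hc : (c : ℕ) < 3*n+3
    · have hk : (c:ℕ)/3 ≤ n := by omega
      have hr : (c:ℕ)%3 < 3 := by omega
      have hc3 : 3*((c:ℕ)/3) + ((c:ℕ)%3) = (c:ℕ) := by omega
      have := hcoef ⟨(c:ℕ)%3, hr⟩ ((c:ℕ)/3) hk
      rw [show ((⟨(c:ℕ)%3, hr⟩ : Fin 3) : ℕ) = (c:ℕ)%3 from rfl, hc3, huv] at this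
      simpa using this
    · have hc3 : (c:ℕ) = 3*n+3 := by omega
      have := hw
      rw [← hc3, huv] at this
      simpa using this
  have hrn := LinearMap.finrank_range_add_finrank_ker A.mulVecLin
  rw [hker, finrank_bot, add_zero, Module.finrank_pi] at hrn
  show Module.finrank ℝ (LinearMap.range A.mulVecLin) = 3 * n + 4
  rw [hrn, Fintype.card_fin]
end

section
/- Suppose the target and observer both move with polynomial trajectories of degree at most n and the observer has a nonzero term of degree n+1, i.e. p_o(t) = c₀ + ... + c_n tⁿ + d·t^{n+1} with d ≠ 0. Then the observability condition of Theorem 1 holds: the relative trajectory and the target size ℓ are uniquely determined by the bearing and angle functions. -/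
/-!
The angle function fixes the ratio `‖s'(t)‖ / ‖s(t)‖ = ℓ' / ℓ`, and the bearing function then
forces `s'(t) = (ℓ' / ℓ) • s(t)` for every `t`. Both sides are vector polynomials in `t`, so
their coefficients agree; the common leading coefficient `d ≠ 0` gives `d = (ℓ' / ℓ) • d`,
hence `ℓ' = ℓ`, and the lower coefficients then give `s' = s`.
-/

open Polynomial

theorem eq_of_forall_sum_pow_smul_eq {K E : Type*} [Field K] [Infinite K] [AddCommGroup E]
    [Module K E] {m : ℕ} {v w : Fin m → E}
    (h : ∀ t : K, ∑ j : Fin m, t ^ (j : ℕ) • v j = ∑ j : Fin m, t ^ (j : ℕ) • w j) : v = w := by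
  funext j
  rw [← sub_eq_zero, ← Module.forall_dual_apply_eq_zero_iff K]
  intro φ
  have hpoly : ∑ k : Fin m, C (φ (v k)) * X ^ (k : ℕ) = ∑ k : Fin m, C (φ (w k)) * X ^ (k : ℕ) := by
    refine Polynomial.funext fun t => ?_
    simpa [eval_finsetSum, mul_comm _ (t ^ _)] using congrArg φ (h t)
  have hcoeff := congrArg (coeff · j) hpoly
  simpa [finsetSum_coeff, coeff_C_mul, coeff_X_pow, Fin.val_eq_val, sub_eq_zero] using hcoeff

theorem sum_pow_smul_add_pow_smul_eq_sum_snoc {K E : Type*} [Semiring K] [AddCommMonoid E]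
    [Module K E] {n : ℕ} (s : Fin (n + 1) → E) (d : E) (t : K) :
    (∑ j : Fin (n + 1), t ^ (j : ℕ) • s j) + t ^ (n + 1) • d
      = ∑ j : Fin (n + 2), t ^ (j : ℕ) • Fin.snoc (α := fun _ => E) s d j := by
  simp [Fin.sum_univ_castSucc (n := n + 1)]

theorem eq_smul_of_inv_norm_smul_eq_of_div_norm_eq {E : Type*} [NormedAddCommGroup E]
    [NormedSpace ℝ E] {x y : E} {ℓ ℓ' : ℝ} (hx : x ≠ 0) (hy : y ≠ 0) (hℓ : ℓ ≠ 0)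
    (hdir : ‖x‖⁻¹ • x = ‖y‖⁻¹ • y) (hsize : ℓ / ‖x‖ = ℓ' / ‖y‖) : y = (ℓ' / ℓ) • x := by
  have hx' : ‖x‖ ≠ 0 := norm_ne_zero_iff.mpr hx
  have hy' : ‖y‖ ≠ 0 := norm_ne_zero_iff.mpr hy
  have hratio : ‖y‖ / ‖x‖ = ℓ' / ℓ := by
    rw [div_eq_div_iff hx' hy'] at hsize
    rw [div_eq_div_iff hx' hℓ]
    linarith
  calc y = ‖y‖ • ‖y‖⁻¹ • y := by rw [smul_smul, mul_inv_cancel₀ hy', one_smul]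
    _ = (‖y‖ / ‖x‖) • x := by rw [← hdir, smul_smul, div_eq_mul_inv]
    _ = (ℓ' / ℓ) • x := by rw [hratio]

/-- Corollary of Theorem 1: if the observer's trajectory has a nonzero term of
degree `n+1` (so the relative trajectory is
`s(t) = s₀ + ⋯ + sₙ tⁿ + t^{n+1} d` with `d ≠ 0`), then the bearing function
`g(t) = s(t)/‖s(t)‖` and the angle function `θ(t) = ℓ/‖s(t)‖` uniquely
determine the relative trajectory and the target size `ℓ`. -/
theorem observable_with_degree_succ_term
    (n : ℕ) (d : EuclideanSpace ℝ (Fin 3)) (hd : d ≠ 0) :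
    ∀ (s s' : Fin (n + 1) → EuclideanSpace ℝ (Fin 3)) (ℓ ℓ' : ℝ),
      0 < ℓ → 0 < ℓ' →
      (∀ t : ℝ, (∑ j : Fin (n + 1), t ^ (j : ℕ) • s j) + t ^ (n + 1) • d ≠ 0) →
      (∀ t : ℝ, (∑ j : Fin (n + 1), t ^ (j : ℕ) • s' j) + t ^ (n + 1) • d ≠ 0) →
      (∀ t : ℝ, ‖(∑ j : Fin (n + 1), t ^ (j : ℕ) • s j) + t ^ (n + 1) • d‖⁻¹ •
            ((∑ j : Fin (n + 1), t ^ (j : ℕ) • s j) + t ^ (n + 1) • d) =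
          ‖(∑ j : Fin (n + 1), t ^ (j : ℕ) • s' j) + t ^ (n + 1) • d‖⁻¹ •
            ((∑ j : Fin (n + 1), t ^ (j : ℕ) • s' j) + t ^ (n + 1) • d)) →
      (∀ t : ℝ, ℓ / ‖(∑ j : Fin (n + 1), t ^ (j : ℕ) • s j) + t ^ (n + 1) • d‖ =
          ℓ' / ‖(∑ j : Fin (n + 1), t ^ (j : ℕ) • s' j) + t ^ (n + 1) • d‖) →
      s = s' ∧ ℓ = ℓ' := by
  intro s s' ℓ ℓ' hℓ _ hne hne' hg hθ
  have hcoeff : Fin.snoc (α := fun _ => EuclideanSpace ℝ (Fin 3)) s' d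
      = (ℓ' / ℓ) • Fin.snoc (α := fun _ => EuclideanSpace ℝ (Fin 3)) s d := by
    refine eq_of_forall_sum_pow_smul_eq fun t : ℝ => ?_
    have hscale := eq_smul_of_inv_norm_smul_eq_of_div_norm_eq (hne t) (hne' t) hℓ.ne' (hg t) (hθ t)
    simp only [sum_pow_smul_add_pow_smul_eq_sum_snoc, Finset.smul_sum] at hscale
    simpa only [Pi.smul_apply, smul_comm (ℓ' / ℓ)] using hscale
  have hc : ℓ' / ℓ = 1 := by
    have hlast : d = (ℓ' / ℓ) • d := by simpa using congrFun hcoeff (Fin.last (n + 1))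
    exact (smul_left_injective ℝ hd ((one_smul ℝ d).trans hlast)).symm
  rw [hc, one_smul] at hcoeff
  exact ⟨(Fin.snoc_injective2 hcoeff).1.symm, (div_eq_one_iff_eq hℓ.ne').mp hc |>.symm⟩
end
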